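/- Let ν be a natural number, ĝ ∈ ℂ^{ν+1}, and define G₀(ω) = 2·Re(Σ_{k=0}^{ν} ĝ_k e^{ikω}). Let M : ℝ → ℝ be a measurable function that is integrable on [−π,π]. Assume 1+G₀(ω) > 0 for all ω ∈ [−π,π], and assume the stationarity conditions: for every integer k with |k| ≤ ν, ∫_{−π}^{π} e^{ikω}/(1+G₀(ω)) dω = −∫_{−π}^{π} M(ω)·e^{ikω} dω. Then (1/2π)∫_{−π}^{π} M(ω)·(1+G₀(ω)) dω = −1. -/

import Mathlib

open Complex Real MeasureTheory

/-- The real trigonometric polynomial `G₀(ω) = 2 Re(Σ_k ĝ_k e^{ikω})`. -/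
noncomputable def G0 {ν : ℕ} (g : Fin (ν + 1) → ℂ) (ω : ℝ) : ℝ :=
  2 * (∑ k : Fin (ν + 1), g k * Complex.exp (Complex.I * ((k : ℕ) : ℂ) * (ω : ℂ))).re

/-- Key identity (gm3) in the proof of Property 2: if `G₀` satisfies the first-order
stationarity conditions for the Ungerboeck MILB, then `(1/2π)∫ M(1+G₀) = −1`. -/
theorem stmt7 (ν : ℕ) (g : Fin (ν + 1) → ℂ) (M : ℝ → ℝ)
    (hMmeas : Measurable M) (hMint : IntegrableOn M (Set.Icc (-π) π))
    (hpos : ∀ ω ∈ Set.Icc (-π) π, 0 < 1 + G0 g ω)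
    (hstat : ∀ k : ℤ, |k| ≤ (ν : ℤ) →
      (∫ ω in (-π)..π,
          Complex.exp (Complex.I * (k : ℂ) * (ω : ℂ)) / ((1 + G0 g ω : ℝ) : ℂ)) =
        -∫ ω in (-π)..π,
            ((M ω : ℝ) : ℂ) * Complex.exp (Complex.I * (k : ℂ) * (ω : ℂ))) :
    (1 / (2 * π)) * ∫ ω in (-π)..π, M ω * (1 + G0 g ω) = -1 := by
  have hπ : (0:ℝ) < π := Real.pi_pos
  have hle : (-π : ℝ) ≤ π := by linarith
  set E : ℤ → ℝ → ℂ := fun k ω => Complex.exp (Complex.I * (k : ℂ) * (ω : ℂ)) with hEdef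
  set D : ℝ → ℂ := fun ω => ((1 + G0 g ω : ℝ) : ℂ) with hDdef
  -- decomposition of D
  have hA : ∀ ω : ℝ, D ω = 1 + ∑ k : Fin (ν+1),
      (g k * E ((k : ℕ) : ℤ) ω + (starRingEnd ℂ) (g k) * E (-((k : ℕ) : ℤ)) ω) := by
    intro ω
    have hconj : ∀ k : Fin (ν+1),
        E (-((k : ℕ) : ℤ)) ω = (starRingEnd ℂ) (Complex.exp (Complex.I * ((k:ℕ):ℂ) * (ω:ℂ))) := by
      intro k
      rw [← Complex.exp_conj]
      simp only [hEdef]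
      congr 1
      simp only [map_mul, Complex.conj_I, Complex.conj_ofReal, map_natCast]
      push_cast
      ring
    have hsplit : ∀ k : Fin (ν+1), E ((k : ℕ) : ℤ) ω = Complex.exp (Complex.I * ((k:ℕ):ℂ) * (ω:ℂ)) := by
      intro k; simp only [hEdef]; norm_cast
    simp only [hDdef, G0]
    push_cast
    set S : ℂ := ∑ k : Fin (ν+1), g k * Complex.exp (Complex.I * ((k:ℕ):ℂ) * (ω:ℂ)) with hS
    have h1 : ((2 * S.re : ℝ) : ℂ) = S + (starRingEnd ℂ) S := (Complex.add_conj S).symm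
    push_cast at h1
    rw [h1]
    rw [map_sum]
    rw [← Finset.sum_add_distrib]
    congr 1
    apply Finset.sum_congr rfl
    intro k _
    rw [hconj k, hsplit k, map_mul]
  have hG0cont : Continuous (G0 g) := by
    unfold G0; fun_prop
  have hDcont : Continuous D := by
    simp only [hDdef]; fun_prop
  have hEcont : ∀ k : ℤ, Continuous (E k) := by
    intro k; simp only [hEdef]; fun_prop
  have huIcc : Set.uIcc (-π) π = Set.Icc (-π) π := Set.uIcc_of_le hle
  have hDne : ∀ ω ∈ Set.Icc (-π) π, D ω ≠ 0 := by
    intro ω hω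
    simp only [hDdef]
    exact_mod_cast (hpos ω hω).ne'
  have hIinv : ∀ k : ℤ, IntervalIntegrable (fun ω => E k ω / D ω) volume (-π) π := by
    intro k
    apply ContinuousOn.intervalIntegrable
    rw [huIcc]
    exact ((hEcont k).continuousOn).div hDcont.continuousOn hDne
  have hM : IntervalIntegrable M volume (-π) π :=
    (intervalIntegrable_iff_integrableOn_Icc_of_le hle).mpr hMint
  have hMC : IntervalIntegrable (fun ω => (M ω : ℂ)) volume (-π) π := ⟨hM.1.ofReal, hM.2.ofReal⟩
  have hIME : ∀ k : ℤ, IntervalIntegrable (fun ω => (M ω:ℂ) * E k ω) volume (-π) π :=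
    fun k => hMC.mul_continuousOn ((hEcont k).continuousOn)
  have hkbd : ∀ k : Fin (ν+1), |((k:ℕ):ℤ)| ≤ (ν:ℤ) := by
    intro k
    rw [Int.abs_natCast]
    exact_mod_cast Nat.lt_succ_iff.mp k.isLt
  have hkbd' : ∀ k : Fin (ν+1), |(-((k:ℕ):ℤ))| ≤ (ν:ℤ) := by
    intro k; rw [abs_neg]; exact hkbd k
  have hstatE : ∀ k : ℤ, |k| ≤ (ν:ℤ) →
      (∫ ω in (-π)..π, E k ω / D ω) = -∫ ω in (-π)..π, (M ω:ℂ) * E k ω := by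
    intro k hk
    exact hstat k hk
  -- the key complex identity
  have hsum_int : ∀ k : Fin (ν+1), IntervalIntegrable (fun ω =>
      g k * (E ((k:ℕ):ℤ) ω / D ω) + (starRingEnd ℂ) (g k) * (E (-((k:ℕ):ℤ)) ω / D ω))
      volume (-π) π :=
    fun k => ((hIinv _).const_mul _).add ((hIinv _).const_mul _)
  have hsum_int2 : ∀ k : Fin (ν+1), IntervalIntegrable (fun ω =>
      g k * ((M ω:ℂ) * E ((k:ℕ):ℤ) ω) + (starRingEnd ℂ) (g k) * ((M ω:ℂ) * E (-((k:ℕ):ℤ)) ω))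
      volume (-π) π :=
    fun k => ((hIME _).const_mul _).add ((hIME _).const_mul _)
  have hInt1 : (∫ ω in (-π)..π, (1:ℂ)) = ((2*π:ℝ):ℂ) := by
    simp
    push_cast
    ring
  have hcongr1 : (∫ ω in (-π)..π, (1:ℂ)) = ∫ ω in (-π)..π, (E 0 ω / D ω +
      ∑ k : Fin (ν+1), (g k * (E ((k:ℕ):ℤ) ω / D ω) +
        (starRingEnd ℂ) (g k) * (E (-((k:ℕ):ℤ)) ω / D ω))) := by
    apply intervalIntegral.integral_congr
    intro ω hω
    rw [huIcc] at hω
    have hne := hDne ω hω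
    have hE0 : E 0 ω = 1 := by simp [hEdef]
    simp only [hE0]
    simp only [← mul_div_assoc, ← add_div, ← Finset.sum_div]
    rw [← hA ω, div_self hne]
  have hlin1 : (∫ ω in (-π)..π, (E 0 ω / D ω +
      ∑ k : Fin (ν+1), (g k * (E ((k:ℕ):ℤ) ω / D ω) +
        (starRingEnd ℂ) (g k) * (E (-((k:ℕ):ℤ)) ω / D ω)))) =
      (∫ ω in (-π)..π, E 0 ω / D ω) +
      ∑ k : Fin (ν+1), ((g k * ∫ ω in (-π)..π, E ((k:ℕ):ℤ) ω / D ω) +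
        ((starRingEnd ℂ) (g k) * ∫ ω in (-π)..π, E (-((k:ℕ):ℤ)) ω / D ω)) := by
    rw [intervalIntegral.integral_add (hIinv 0)]
    · congr 1
      rw [intervalIntegral.integral_finset_sum (fun k _ => hsum_int k)]
      apply Finset.sum_congr rfl
      intro k _
      rw [intervalIntegral.integral_add ((hIinv _).const_mul _) ((hIinv _).const_mul _),
        intervalIntegral.integral_const_mul, intervalIntegral.integral_const_mul]
    · have : (fun ω => ∑ k : Fin (ν+1), (g k * (E ((k:ℕ):ℤ) ω / D ω) +
          (starRingEnd ℂ) (g k) * (E (-((k:ℕ):ℤ)) ω / D ω))) =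
          ∑ k : Fin (ν+1), (fun ω => g k * (E ((k:ℕ):ℤ) ω / D ω) +
          (starRingEnd ℂ) (g k) * (E (-((k:ℕ):ℤ)) ω / D ω)) := by
        funext ω; simp
      rw [this]
      exact IntervalIntegrable.sum _ (fun i _ => hsum_int i)
  have happ : (∫ ω in (-π)..π, E 0 ω / D ω) +
      ∑ k : Fin (ν+1), ((g k * ∫ ω in (-π)..π, E ((k:ℕ):ℤ) ω / D ω) +
        ((starRingEnd ℂ) (g k) * ∫ ω in (-π)..π, E (-((k:ℕ):ℤ)) ω / D ω)) =
      -((∫ ω in (-π)..π, (M ω:ℂ) * E 0 ω) +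
      ∑ k : Fin (ν+1), ((g k * ∫ ω in (-π)..π, (M ω:ℂ) * E ((k:ℕ):ℤ) ω) +
        ((starRingEnd ℂ) (g k) * ∫ ω in (-π)..π, (M ω:ℂ) * E (-((k:ℕ):ℤ)) ω))) := by
    rw [hstatE 0 (by simp)]
    have : ∀ k : Fin (ν+1), (g k * ∫ ω in (-π)..π, E ((k:ℕ):ℤ) ω / D ω) +
        ((starRingEnd ℂ) (g k) * ∫ ω in (-π)..π, E (-((k:ℕ):ℤ)) ω / D ω) =
        -((g k * ∫ ω in (-π)..π, (M ω:ℂ) * E ((k:ℕ):ℤ) ω) +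
        ((starRingEnd ℂ) (g k) * ∫ ω in (-π)..π, (M ω:ℂ) * E (-((k:ℕ):ℤ)) ω)) := by
      intro k
      rw [hstatE _ (hkbd k), hstatE _ (hkbd' k)]
      ring
    rw [Finset.sum_congr rfl (fun k _ => this k)]
    rw [Finset.sum_neg_distrib]
    ring
  have hlin2 : (∫ ω in (-π)..π, (M ω:ℂ) * E 0 ω) +
      ∑ k : Fin (ν+1), ((g k * ∫ ω in (-π)..π, (M ω:ℂ) * E ((k:ℕ):ℤ) ω) +
        ((starRingEnd ℂ) (g k) * ∫ ω in (-π)..π, (M ω:ℂ) * E (-((k:ℕ):ℤ)) ω)) =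
      ∫ ω in (-π)..π, (M ω:ℂ) * D ω := by
    have hsumfn : (fun ω => ∑ k : Fin (ν+1), (g k * ((M ω:ℂ) * E ((k:ℕ):ℤ) ω) +
          (starRingEnd ℂ) (g k) * ((M ω:ℂ) * E (-((k:ℕ):ℤ)) ω))) =
          ∑ k : Fin (ν+1), (fun ω => g k * ((M ω:ℂ) * E ((k:ℕ):ℤ) ω) +
          (starRingEnd ℂ) (g k) * ((M ω:ℂ) * E (-((k:ℕ):ℤ)) ω)) := by
      funext ω; simp
    have step : (∫ ω in (-π)..π, (M ω:ℂ) * D ω) =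
        (∫ ω in (-π)..π, (M ω:ℂ) * E 0 ω) + ∫ ω in (-π)..π,
          ∑ k : Fin (ν+1), (g k * ((M ω:ℂ) * E ((k:ℕ):ℤ) ω) +
          (starRingEnd ℂ) (g k) * ((M ω:ℂ) * E (-((k:ℕ):ℤ)) ω)) := by
      rw [← intervalIntegral.integral_add (hIME 0)]
      · apply intervalIntegral.integral_congr
        intro ω _
        have hE0 : E 0 ω = 1 := by simp [hEdef]
        simp only [hE0, mul_one]
        rw [hA ω, mul_add, mul_one, Finset.mul_sum]
        congr 1
        apply Finset.sum_congr rfl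
        intro k _
        ring
      · rw [hsumfn]
        exact IntervalIntegrable.sum _ (fun i _ => hsum_int2 i)
    rw [step]
    congr 1
    rw [intervalIntegral.integral_finset_sum (fun k _ => hsum_int2 k)]
    apply Finset.sum_congr rfl
    intro k _
    rw [intervalIntegral.integral_add ((hIME _).const_mul _) ((hIME _).const_mul _),
      intervalIntegral.integral_const_mul, intervalIntegral.integral_const_mul]
  have hfin : (∫ ω in (-π)..π, (M ω:ℂ) * D ω) =
      ((∫ ω in (-π)..π, M ω * (1 + G0 g ω) : ℝ) : ℂ) := by
    rw [← intervalIntegral.integral_ofReal]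
    apply intervalIntegral.integral_congr
    intro ω _
    simp only [hDdef]
    push_cast
    ring
  have key : ((2*π:ℝ):ℂ) = -((∫ ω in (-π)..π, M ω * (1 + G0 g ω) : ℝ) : ℂ) := by
    rw [← hInt1, hcongr1, hlin1, happ, hlin2, hfin]
  have hreal : (∫ ω in (-π)..π, M ω * (1 + G0 g ω)) = -(2*π) := by
    rw [← Complex.ofReal_neg] at key
    have := Complex.ofReal_inj.mp key
    linarith
  rw [hreal]
  field_simp
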